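/- arXiv:2603.03909 — 2 statements merged into one kernel-verified Lean document; each statement's English description precedes it below -/
import Mathlib

section
/- In a rooted directed biedged graph satisfying the traversal rules, a snarl whose two frontier vertices are both left nodes, or both right nodes, cannot be an ultrabubble: its separated subgraph, if acyclic, necessarily contains a tip. -/
/-- A directed biedged graph satisfying the traversal rules: vertices are
partitioned into left nodes and right nodes; each vertex `v` has a unique
black-edge partner `partner v` on the other side; black edges are directed from
a left node to its right partner; grey edges are directed from right nodes to
left nodes. -/
structure Biedged (V : Type) where
  isLeft : V → Prop
  partner : V → V
  grey : V → V → Prop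
  partner_invol : ∀ v, partner (partner v) = v
  partner_flip : ∀ v, isLeft (partner v) ↔ ¬ isLeft v
  grey_dir : ∀ u v, grey u v → ¬ isLeft u ∧ isLeft v

/-- The black edges: from a left node to its partner. -/
def Biedged.black {V : Type} (G : Biedged V) (u v : V) : Prop :=
  G.isLeft u ∧ v = G.partner u

/-- The directed edge relation of the biedged graph. -/
def Biedged.E {V : Type} (G : Biedged V) (u v : V) : Prop :=
  G.black u v ∨ G.grey u v

/-- `walkN E n u v`: there is a directed walk of length `n` from `u` to `v`. -/
def walkN {V : Type} (E : V → V → Prop) : ℕ → V → V → Prop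
  | 0, u, v => u = v
  | n+1, u, v => ∃ w, E u w ∧ walkN E n w v

/-- Shortest-path distance: the length of a shortest directed walk. -/
noncomputable def gdist {V : Type} (E : V → V → Prop) (u v : V) : ℕ :=
  sInf {n | walkN E n u v}

/-- The edge relation obtained from the biedged graph by deleting the two black
edges incident to the snarl frontier vertices `x` and `y`. -/
def snarlE' {V : Type} (G : Biedged V) (x y : V) (u v : V) : Prop :=
  G.E u v ∧ ¬(u = x ∧ v = G.partner x) ∧ ¬(u = G.partner x ∧ v = x) ∧
    ¬(u = y ∧ v = G.partner y) ∧ ¬(u = G.partner y ∧ v = y)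


lemma exists_min_of_acyclic {V : Type} [Finite V] [Nonempty V] (r : V → V → Prop)
    (h : ∀ v, ¬ Relation.TransGen r v v) : ∃ t : V, ∀ u, ¬ r u t := by
  haveI : IsTrans V (Relation.TransGen r) := ⟨fun _ _ _ => Relation.TransGen.trans⟩
  haveI : IsIrrefl V (Relation.TransGen r) := ⟨h⟩
  have wf := Finite.wellFounded_of_trans_of_irrefl (Relation.TransGen r)
  obtain ⟨t, -, ht⟩ := wf.has_min Set.univ Set.univ_nonempty
  exact ⟨t, fun u hu => ht u trivial (Relation.TransGen.single hu)⟩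

/-- In a rooted directed biedged graph satisfying the traversal rules, a snarl
whose two frontier vertices are both left nodes, or both right nodes, cannot be
an ultrabubble: its separated component `X`, if acyclic, necessarily contains a
tip (a vertex other than the frontiers with no incident grey edges). -/
theorem stmt_8 {V : Type} [Fintype V] (G : Biedged V) (root : V)
    (hrootL : G.isLeft root)
    (hroot_src : ∀ u : V, ¬ G.E u root)
    (hreach : ∀ v : V, ∃ n : ℕ, walkN G.E n root v)
    (x y : V) (X : Set V)
    (hxy : x ≠ y) (hblack_ne : G.partner x ≠ y)
    (hLLRR : (G.isLeft x ∧ G.isLeft y) ∨ (¬ G.isLeft x ∧ ¬ G.isLeft y))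
    (hxX : x ∈ X) (hyX : y ∈ X)
    (hx'X : G.partner x ∉ X) (hy'X : G.partner y ∉ X)
    (hsep : ∀ u v : V, snarlE' G x y u v → (u ∈ X ↔ v ∈ X))
    (hconnX : ∀ u ∈ X,
      Relation.ReflTransGen (fun a b => snarlE' G x y a b ∨ snarlE' G x y b a) x u)
    (hacyc : ∀ v ∈ X, ¬ Relation.TransGen (snarlE' G x y) v v) :
    ∃ t ∈ X, t ≠ x ∧ t ≠ y ∧ (∀ u : V, ¬ G.grey u t) ∧ (∀ u : V, ¬ G.grey t u) := by

  classical
  set S := snarlE' G x y with hS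
  -- left frontier vertices have no outgoing S-edges
  have noOutLeft : ∀ z w, G.isLeft z → (z = x ∨ z = y) → ¬ S z w := by
    rintro z w hL hz ⟨hE, h1, h2, h3, h4⟩
    rcases hE with hb | hg
    · rcases hz with rfl | rfl
      · exact h1 ⟨rfl, hb.2⟩
      · exact h3 ⟨rfl, hb.2⟩
    · exact (G.grey_dir _ _ hg).1 hL
  -- right frontier vertices have no incoming S-edges
  have noInRight : ∀ z u, ¬ G.isLeft z → (z = x ∨ z = y) → ¬ S u z := by
    rintro z u hR hz ⟨hE, h1, h2, h3, h4⟩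
    rcases hE with hb | hg
    · have hu : u = G.partner z := by rw [hb.2, G.partner_invol]
      rcases hz with rfl | rfl
      · exact h2 ⟨hu, rfl⟩
      · exact h4 ⟨hu, rfl⟩
    · exact hR (G.grey_dir _ _ hg).2
  haveI : Nonempty ↥X := ⟨⟨x, hxX⟩⟩
  rcases hLLRR with ⟨hLx, hLy⟩ | ⟨hRx, hRy⟩
  · -- both left: take a source of the DAG on X
    obtain ⟨t, htmin⟩ := exists_min_of_acyclic (fun a b : ↥X => S a.1 b.1)
      (fun v hv => hacyc v.1 v.2
        (Relation.TransGen.lift Subtype.val (fun a b hab => hab) _ _ hv))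
    have htin : ∀ u : V, ¬ S u t.1 := by
      intro u hu
      have huX : u ∈ X := (hsep u t.1 hu).mpr t.2
      exact htmin ⟨u, huX⟩ hu
    -- t is a left node
    have hLt : G.isLeft t.1 := by
      by_contra hR
      apply htin (G.partner t.1)
      refine ⟨Or.inl ⟨(G.partner_flip t.1).mpr hR, (G.partner_invol t.1).symm⟩,
        ?_, ?_, ?_, ?_⟩
      · rintro ⟨-, h2⟩; exact hx'X (h2 ▸ t.2)
      · rintro ⟨-, h2⟩; exact hR (h2 ▸ hLx)
      · rintro ⟨-, h2⟩; exact hy'X (h2 ▸ t.2)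
      · rintro ⟨-, h2⟩; exact hR (h2 ▸ hLy)
    -- t ≠ x and t ≠ y since x,y are sinks with incident edges
    have htx : t.1 ≠ x := by
      intro hteq
      rcases (hconnX y hyX).cases_head with heq | ⟨c, hc, -⟩
      · exact hxy heq
      rcases hc with hc | hc
      · exact noOutLeft x c hLx (Or.inl rfl) hc
      · exact htin c (hteq ▸ hc)
    have hty : t.1 ≠ y := by
      intro hteq
      rcases (hconnX y hyX).cases_tail with heq | ⟨c, -, hc⟩
      · exact hxy heq.symm
      rcases hc with hc | hc
      · exact htin c (hteq ▸ hc)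
      · exact noOutLeft y c hLy (Or.inr rfl) hc
    refine ⟨t.1, t.2, htx, hty, ?_, fun u hg => (G.grey_dir _ _ hg).1 hLt⟩
    intro u hg
    apply htin u
    refine ⟨Or.inr hg, ?_, ?_, ?_, ?_⟩
    · rintro ⟨rfl, -⟩; exact (G.grey_dir _ _ hg).1 hLx
    · rintro ⟨-, h2⟩; exact htx h2
    · rintro ⟨rfl, -⟩; exact (G.grey_dir _ _ hg).1 hLy
    · rintro ⟨-, h2⟩; exact hty h2
  · -- both right: take a sink of the DAG on X
    obtain ⟨t, htmin⟩ := exists_min_of_acyclic (fun a b : ↥X => S b.1 a.1)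
      (fun v hv => hacyc v.1 v.2
        (Relation.transGen_swap.mp
          (Relation.TransGen.lift Subtype.val (fun a b hab => hab) _ _ hv)))
    have htout : ∀ u : V, ¬ S t.1 u := by
      intro u hu
      have huX : u ∈ X := (hsep t.1 u hu).mp t.2
      exact htmin ⟨u, huX⟩ hu
    -- t is a right node
    have hRt : ¬ G.isLeft t.1 := by
      intro hLt
      apply htout (G.partner t.1)
      refine ⟨Or.inl ⟨hLt, rfl⟩, ?_, ?_, ?_, ?_⟩
      · rintro ⟨h1, -⟩; exact hRx (h1 ▸ hLt)
      · rintro ⟨h1, -⟩; exact hx'X (h1 ▸ t.2)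
      · rintro ⟨h1, -⟩; exact hRy (h1 ▸ hLt)
      · rintro ⟨h1, -⟩; exact hy'X (h1 ▸ t.2)
    have htx : t.1 ≠ x := by
      intro hteq
      rcases (hconnX y hyX).cases_head with heq | ⟨c, hc, -⟩
      · exact hxy heq
      rcases hc with hc | hc
      · exact htout c (hteq ▸ hc)
      · exact noInRight x c hRx (Or.inl rfl) hc
    have hty : t.1 ≠ y := by
      intro hteq
      rcases (hconnX y hyX).cases_tail with heq | ⟨c, -, hc⟩
      · exact hxy heq.symm
      rcases hc with hc | hc
      · exact noInRight y c hRy (Or.inr rfl) hc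
      · exact htout c (hteq ▸ hc)
    refine ⟨t.1, t.2, htx, hty, fun u hg => hRt (G.grey_dir _ _ hg).2, ?_⟩
    intro u hg
    apply htout u
    refine ⟨Or.inr hg, ?_, ?_, ?_, ?_⟩
    · rintro ⟨h1, -⟩; exact htx h1
    · rintro ⟨h1, -⟩; exact hx'X (h1 ▸ t.2)
    · rintro ⟨h1, -⟩; exact hty h1
    · rintro ⟨h1, -⟩; exact hy'X (h1 ▸ t.2)
end

section
/- In a rooted directed biedged graph satisfying the traversal rules, if the frontier vertex of a snarl closest to the root is a left node, then the separated component of the snarl contains the root; hence such a snarl cannot be an ultrabubble. -/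
lemma walkN_snoc {V : Type} (E : V → V → Prop) :
    ∀ n u v, walkN E (n+1) u v ↔ ∃ w, walkN E n u w ∧ E w v := by
  intro n
  induction n with
  | zero =>
    intro u v
    constructor
    · rintro ⟨w, hw, h⟩; exact ⟨u, rfl, h ▸ hw⟩
    · rintro ⟨w, hw, h⟩; exact ⟨v, hw ▸ h, rfl⟩
  | succ n ih =>
    intro u v
    constructor
    · rintro ⟨a, ha, h⟩
      obtain ⟨w, hw, he⟩ := (ih a v).1 h
      exact ⟨w, ⟨a, ha, hw⟩, he⟩
    · rintro ⟨w, ⟨a, ha, hw⟩, he⟩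
      exact ⟨a, ha, (ih a v).2 ⟨w, hw, he⟩⟩

lemma gdist_walk {V : Type} {E : V → V → Prop} {u v : V}
    (h : ∃ n, walkN E n u v) : walkN E (gdist E u v) u v :=
  Nat.sInf_mem h

lemma gdist_le {V : Type} {E : V → V → Prop} {u v : V} {n : ℕ}
    (h : walkN E n u v) : gdist E u v ≤ n :=
  Nat.sInf_le h

/-- In a rooted directed biedged graph satisfying the traversal rules, if the
frontier vertex of a snarl closest to the root is a left node, then the
separated component of the snarl (the component of `x` after deleting the two
black edges) contains the root; hence such a snarl cannot be an ultrabubble,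
since the root is a tip (it has no incident grey edges). -/
theorem stmt_9 {V : Type} (G : Biedged V) (root : V)
    (hrootL : G.isLeft root)
    (hroot_src : ∀ u : V, ¬ G.E u root)
    (hreach : ∀ v : V, ∃ n : ℕ, walkN G.E n root v)
    (x y : V) (hxy : x ≠ y) (hblack_ne : G.partner x ≠ y)
    (hxL : G.isLeft x)
    (hclosest : gdist G.E root x ≤ gdist G.E root y) :
    Relation.ReflTransGen (fun a b => snarlE' G x y a b ∨ snarlE' G x y b a) x root ∧
    (∀ u : V, ¬ G.grey u root) ∧ (∀ u : V, ¬ G.grey root u) := by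
  set S := fun a b => snarlE' G x y a b ∨ snarlE' G x y b a with hS
  have hSsymm : Symmetric S := fun a b h => h.symm
  set d := gdist G.E root x with hd
  -- Lemma B: every vertex at distance < d is connected to root in S.
  have hB : ∀ k, ∀ z : V, gdist G.E root z = k → gdist G.E root z < d →
      Relation.ReflTransGen S root z := by
    intro k
    induction k using Nat.strong_induction_on with
    | _ k ih =>
      intro z hzk hzd
      match k, hzk with
      | 0, hzk =>
        have h0 : walkN G.E 0 root z := by
          have := gdist_walk (E := G.E) (hreach z); rwa [hzk] at this
        exact h0 ▸ Relation.ReflTransGen.refl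
      | (k+1), hzk =>
        have hw : walkN G.E (k+1) root z := by
          have := gdist_walk (E := G.E) (hreach z); rwa [hzk] at this
        obtain ⟨w, hwalk, he⟩ := (walkN_snoc G.E k root z).1 hw
        have hwle : gdist G.E root w ≤ k := gdist_le hwalk
        have hwd : gdist G.E root w < d := lt_of_le_of_lt hwle (by omega)
        have hroot_w : Relation.ReflTransGen S root w :=
          ih (gdist G.E root w) (by omega) w rfl hwd
        have hstep : S w z := by
          left
          refine ⟨he, ?_, ?_, ?_, ?_⟩
          · rintro ⟨rfl, rfl⟩
            exact absurd hzk (by omega)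
          · rintro ⟨rfl, rfl⟩
            omega
          · rintro ⟨rfl, rfl⟩
            have : d ≤ gdist G.E root w := le_trans hclosest le_rfl
            omega
          · rintro ⟨rfl, rfl⟩
            have : d ≤ gdist G.E root z := hclosest
            omega
        exact hroot_w.tail hstep
  -- Main connectivity: root connected to x.
  have hmain : Relation.ReflTransGen S root x := by
    rcases Nat.eq_zero_or_pos d with hd0 | hdpos
    · have h0 : walkN G.E 0 root x := by
        have := gdist_walk (E := G.E) (hreach x); rwa [← hd, hd0] at this
      exact h0 ▸ Relation.ReflTransGen.refl
    · obtain ⟨k, hk⟩ := Nat.exists_eq_add_of_lt hdpos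
      rw [zero_add] at hk
      have hw : walkN G.E (k+1) root x := by
        have := gdist_walk (E := G.E) (hreach x); rwa [← hd, hk] at this
      obtain ⟨w, hwalk, he⟩ := (walkN_snoc G.E k root x).1 hw
      have hwle : gdist G.E root w ≤ k := gdist_le hwalk
      have hpxnL : ¬ G.isLeft (G.partner x) := fun h => (G.partner_flip x).mp h hxL
      have hstep : S w x := by
        left
        refine ⟨he, ?_, ?_, ?_, ?_⟩
        · rintro ⟨rfl, -⟩
          omega
        · rintro ⟨rfl, -⟩
          -- w = partner x; any edge into partner x comes from x via black edge
          rcases Nat.eq_zero_or_pos (gdist G.E root (G.partner x)) with h0 | hpos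
          · have hwalk0 : walkN G.E 0 root (G.partner x) := by
              have := gdist_walk (E := G.E) (hreach (G.partner x)); rwa [h0] at this
            exact hpxnL (hwalk0 ▸ hrootL)
          · obtain ⟨j, hj⟩ := Nat.exists_eq_add_of_lt hpos
            rw [zero_add] at hj
            have hw2 : walkN G.E (j+1) root (G.partner x) := by
              have := gdist_walk (E := G.E) (hreach (G.partner x)); rwa [hj] at this
            obtain ⟨w', hwalk', he'⟩ := (walkN_snoc G.E j root (G.partner x)).1 hw2
            rcases he' with ⟨hL', hp'⟩ | hg'
            · have hw'x : w' = x := by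
                have h2 := congrArg G.partner hp'
                rw [G.partner_invol, G.partner_invol] at h2
                exact h2.symm
              rw [hw'x] at hwalk'
              have : gdist G.E root x ≤ j := gdist_le hwalk'
              omega
            · exact hpxnL (G.grey_dir _ _ hg').2
        · rintro ⟨h1, -⟩
          rw [h1] at hwle
          omega
        · rintro ⟨-, h2⟩
          exact hxy h2
      have hroot_w : Relation.ReflTransGen S root w :=
        hB (gdist G.E root w) w rfl (by omega)
      exact hroot_w.tail hstep
  refine ⟨(haveI : Std.Symm S := ⟨fun a b h => hSsymm h⟩; Std.Symm.symm _ _ hmain), ?_, ?_⟩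
  · intro u hg
    exact hroot_src u (Or.inr hg)
  · intro u hg
    exact (G.grey_dir _ _ hg).1 hrootL
end
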